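/- Let V be a finite type and G a simple graph on V. Let S be the subgroup of the symmetric group Perm(V) generated by the transpositions (a b) over all edges {a,b} of G (the swap group of G). Then a permutation g of V belongs to S if and only if for every vertex v, the vertex g(v) is reachable from v in G. (Equivalently, the swap group of G is the direct product of the full symmetric groups of the connected components of G.) -/

import Mathlib

open Equiv MulAction Subgroup

private lemma swapGroup_aux_mono {V : Type*} [DecidableEq V] (G : SimpleGraph V)
    {σ : Equiv.Perm V}
    (h : σ ∈ Subgroup.closure
        {σ : Equiv.Perm V | ∃ a b : V, G.Adj a b ∧ σ = Equiv.swap a b}) :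
    ∀ v : V, G.Reachable v (σ v) := by
  induction h using Subgroup.closure_induction with
  | mem σ hσ =>
    obtain ⟨a, b, hab, rfl⟩ := hσ
    intro v
    rcases eq_or_ne v a with rfl | hva
    · simpa using hab.reachable
    rcases eq_or_ne v b with rfl | hvb
    · simpa using hab.symm.reachable
    · rw [swap_apply_of_ne_of_ne hva hvb]
  | one => exact fun v => SimpleGraph.Reachable.refl v
  | mul σ τ _ _ hσ hτ =>
    intro v
    exact (hτ v).trans (hσ (τ v))
  | inv σ _ hσ =>
    intro v
    have := hσ (σ⁻¹ v)
    simpa using this.symm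

private lemma swapGroup_aux_swap {V : Type*} [DecidableEq V] (G : SimpleGraph V)
    {u v : V} (h : G.Reachable u v) :
    Equiv.swap u v ∈ Subgroup.closure
        {σ : Equiv.Perm V | ∃ a b : V, G.Adj a b ∧ σ = Equiv.swap a b} := by
  obtain ⟨w⟩ := h
  induction w with
  | nil => rw [Equiv.swap_self]; exact
      (Subgroup.closure _).one_mem
  | @cons a x b hax _ ih =>
    exact SubmonoidClass.swap_mem_trans _ (Subgroup.subset_closure ⟨a, x, hax, rfl⟩) ih

theorem swapGroup_mem_iff_reachable {V : Type*} [Fintype V] [DecidableEq V]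
    (G : SimpleGraph V) (g : Equiv.Perm V) :
    g ∈ Subgroup.closure
        {σ : Equiv.Perm V | ∃ a b : V, G.Adj a b ∧ σ = Equiv.swap a b} ↔
      ∀ v : V, G.Reachable v (g v) := by
  constructor
  · exact swapGroup_aux_mono G
  · intro h
    rw [mem_closure_isSwap (fun f hf => ?_)]
    · refine ⟨Set.toFinite _, fun x => ?_⟩
      refine ⟨⟨Equiv.swap x (g x), swapGroup_aux_swap G (h x)⟩, ?_⟩
      simp [Equiv.Perm.smul_def]
    · obtain ⟨a, b, hab, rfl⟩ := hf
      exact ⟨a, b, hab.ne, rfl⟩
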